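/- Let D₁ be the Lie algebra over a characteristic-zero field F with basis {L(x), I(x) : x ∈ A} for A an abelian group with nondegenerate additive map ∂ : A → F, and bracket [L(x),L(y)] = ∂(y−x)L(x+y), [L(x),I(y)] = ∂(y)I(x+y), [I(x),I(y)] = 0. Then the bilinear alternating map ψ₃ with ψ₃(L(x),I(y)) = δ_{x+y,0}·∂(x)² (and ψ₃ vanishing on pairs L,L and I,I) is a 2-cocycle on D₁. -/
import Mathlib


/-- The bracket of the Lie algebra `D₁` of generalized differential operators of order at
most one, on basis elements: `Sum.inl x` stands for `L x = t^x ∂`, `Sum.inr x` for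
`I x = t^x`.  The result lives in the free module on the basis. -/
noncomputable def d1Bracket {F A : Type*} [Field F] [AddCommGroup A]
    (d : A →+ F) : (A ⊕ A) → (A ⊕ A) → ((A ⊕ A) →₀ F)
  | Sum.inl x, Sum.inl y => Finsupp.single (Sum.inl (x + y)) (d (y - x))
  | Sum.inl x, Sum.inr y => Finsupp.single (Sum.inr (x + y)) (d y)
  | Sum.inr x, Sum.inl y => Finsupp.single (Sum.inr (y + x)) (- d x)
  | Sum.inr _, Sum.inr _ => 0

/-- Evaluation of the bilinear extension of a map `ψ` on basis pairs, in its first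
argument, against an element of the free module. -/
noncomputable def pairEval {F A : Type*} [Field F] [AddCommGroup A]
    (ψ : (A ⊕ A) → (A ⊕ A) → F) (m : (A ⊕ A) →₀ F) (b : A ⊕ A) : F :=
  m.sum fun b' c => c * ψ b' b

theorem pairEval_single {F A : Type*} [Field F] [AddCommGroup A]
    (ψ : (A ⊕ A) → (A ⊕ A) → F) (a : A ⊕ A) (c : F) (b : A ⊕ A) :
    pairEval ψ (Finsupp.single a c) b = c * ψ a b := by
  unfold pairEval
  exact Finsupp.sum_single_index (by simp)

theorem pairEval_zero {F A : Type*} [Field F] [AddCommGroup A]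
    (ψ : (A ⊕ A) → (A ⊕ A) → F) (b : A ⊕ A) :
    pairEval ψ (0 : (A ⊕ A) →₀ F) b = 0 := by
  simp [pairEval]

open Classical in
/-- The map `ψ₃` with `ψ₃(L x, I y) = δ_{x+y,0} ∂(x)²`, vanishing on the pairs (L,L) and (I,I), is an
(alternating) 2-cocycle on `D₁`. -/
theorem stmt_4 {F : Type*} [Field F] [CharZero F]
    {A : Type*} [AddCommGroup A]
    (d : A →+ F) (hd : ∀ x : A, d x = 0 → x = 0)
    (ψ : (A ⊕ A) → (A ⊕ A) → F)
    (hψ : ∀ x y : A, ψ (Sum.inl x) (Sum.inr y) = if x + y = 0 then (d x) ^ 2 else 0)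
    (hψLL : ∀ x y : A, ψ (Sum.inl x) (Sum.inl y) = 0)
    (hψII : ∀ x y : A, ψ (Sum.inr x) (Sum.inr y) = 0)
    (hψIL : ∀ x y : A, ψ (Sum.inr x) (Sum.inl y) = - (if y + x = 0 then (d y) ^ 2 else 0)) :
    (∀ b₁ b₂ : A ⊕ A, ψ b₁ b₂ = - ψ b₂ b₁) ∧
    (∀ b₁ b₂ b₃ : A ⊕ A,
      pairEval ψ (d1Bracket d b₁ b₂) b₃ + pairEval ψ (d1Bracket d b₂ b₃) b₁ +
        pairEval ψ (d1Bracket d b₃ b₁) b₂ = 0) := by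
  constructor
  · rintro (x | x) (y | y) <;> simp [hψ, hψLL, hψII, hψIL]
  · rintro (x | x) (y | y) (z | z) <;>
      simp only [d1Bracket, pairEval_single, pairEval_zero, hψ, hψLL, hψII, hψIL,
        mul_zero, zero_add, add_zero, mul_neg, neg_neg, neg_zero]
    · -- L x, L y, I z
      by_cases hc : x + y + z = 0
      · rw [if_pos hc, if_pos (show x + (y + z) = 0 by rw [← hc]; abel),
          if_pos (show y + (x + z) = 0 by rw [← hc]; abel)]
        have hz : z = -(x + y) := eq_neg_of_add_eq_zero_right hc
        subst hz
        simp only [map_neg, map_add, map_sub]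
        ring
      · rw [if_neg hc, if_neg (fun h => hc (by rw [← h]; abel)),
          if_neg (fun h => hc (by rw [← h]; abel))]
        ring
    · -- L x, I y, L z
      by_cases hc : z + (x + y) = 0
      · rw [if_pos hc, if_pos (show x + (z + y) = 0 by rw [← hc]; abel),
          if_pos (show z + x + y = 0 by rw [← hc]; abel)]
        have hz : z = -(x + y) := eq_neg_of_add_eq_zero_left hc
        subst hz
        simp only [map_neg, map_add, map_sub]
        ring
      · rw [if_neg hc, if_neg (fun h => hc (by rw [← h]; abel)),
          if_neg (fun h => hc (by rw [← h]; abel))]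
        ring
    · -- I x, L y, L z
      by_cases hc : z + (y + x) = 0
      · rw [if_pos hc, if_pos (show y + z + x = 0 by rw [← hc]; abel),
          if_pos (show y + (z + x) = 0 by rw [← hc]; abel)]
        have hz : z = -(y + x) := eq_neg_of_add_eq_zero_left hc
        subst hz
        simp only [map_neg, map_add, map_sub]
        ring
      · rw [if_neg hc, if_neg (fun h => hc (by rw [← h]; abel)),
          if_neg (fun h => hc (by rw [← h]; abel))]
        ring
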